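/- For all positive integers k₁, k₂, and n, the necklace polynomials satisfy M(k₁k₂, n) = Σ gcd(i,j)·M(k₁, i)·M(k₂, j), where the sum is over all pairs (i, j) of positive divisors of n with lcm(i, j) = n. -/

import Mathlib

/-- The necklace polynomial `M(k, n) = (1/n) ∑_{d ∣ n} μ(n/d) k^d`. -/
noncomputable def necklacePoly (k n : ℕ) : ℚ :=
  (1 / (n : ℚ)) * ∑ d ∈ n.divisors, (ArithmeticFunction.moebius (n / d) : ℚ) * (k : ℚ) ^ d

open Finset


lemma necklace_inv (k : ℕ) : ∀ n > 0, ∑ d ∈ n.divisors, ((d : ℕ) : ℚ) * necklacePoly k d = (k : ℚ) ^ n := by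
  rw [ArithmeticFunction.sum_eq_iff_sum_smul_moebius_eq (f := fun d => (d:ℚ) * necklacePoly k d)
    (g := fun n => (k:ℚ)^n)]
  intro n hn
  rw [Nat.sum_divisorsAntidiagonal' (f := fun a b => (ArithmeticFunction.moebius a) • ((k:ℚ)^b))]
  unfold necklacePoly
  rw [Finset.mul_sum]
  field_simp
  ring_nf
  simp [mul_comm]
  rw [Finset.mul_sum]
  congr 1
  ext x
  rw [← mul_assoc, mul_inv_cancel₀, one_mul]
  exact_mod_cast hn.ne'

noncomputable def Spair (k₁ k₂ d : ℕ) : ℚ :=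
  ∑ p ∈ (d.divisors ×ˢ d.divisors).filter (fun p => Nat.lcm p.1 p.2 = d),
    (Nat.gcd p.1 p.2 : ℚ) * necklacePoly k₁ p.1 * necklacePoly k₂ p.2

lemma spair_inv (k₁ k₂ : ℕ) : ∀ n > 0,
    ∑ d ∈ n.divisors, (((d : ℕ) : ℚ) * Spair k₁ k₂ d) = ((k₁ * k₂ : ℕ) : ℚ) ^ n := by
  intro n hn
  have key : ∀ d ∈ n.divisors,
      ((d : ℕ) : ℚ) * Spair k₁ k₂ d =
      ∑ p ∈ (n.divisors ×ˢ n.divisors).filter (fun p => Nat.lcm p.1 p.2 = d),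
        ((p.1 : ℚ) * necklacePoly k₁ p.1) * ((p.2 : ℚ) * necklacePoly k₂ p.2) := by
    intro d hd
    obtain ⟨hdn, hn0⟩ := Nat.mem_divisors.mp hd
    have hd0 : d ≠ 0 := fun h => hn0 (zero_dvd_iff.mp (h ▸ hdn))
    have hset : (n.divisors ×ˢ n.divisors).filter (fun p => Nat.lcm p.1 p.2 = d) =
        (d.divisors ×ˢ d.divisors).filter (fun p => Nat.lcm p.1 p.2 = d) := by
      ext p
      simp only [Finset.mem_filter, Finset.mem_product, Nat.mem_divisors]
      constructor
      · rintro ⟨⟨⟨h1, -⟩, ⟨h2, -⟩⟩, hl⟩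
        exact ⟨⟨⟨hl ▸ Nat.dvd_lcm_left _ _, hd0⟩, ⟨hl ▸ Nat.dvd_lcm_right _ _, hd0⟩⟩, hl⟩
      · rintro ⟨⟨⟨h1, -⟩, ⟨h2, -⟩⟩, hl⟩
        exact ⟨⟨⟨h1.trans hdn, hn0⟩, ⟨h2.trans hdn, hn0⟩⟩, hl⟩
    rw [hset, Spair, Finset.mul_sum]
    apply Finset.sum_congr rfl
    intro p hp
    have hl : Nat.lcm p.1 p.2 = d := (Finset.mem_filter.mp hp).2
    have : (d : ℚ) * (Nat.gcd p.1 p.2 : ℚ) = (p.1 : ℚ) * (p.2 : ℚ) := by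
      have h := Nat.gcd_mul_lcm p.1 p.2
      rw [hl] at h
      rw [mul_comm]
      exact_mod_cast congrArg (Nat.cast : ℕ → ℚ) h
    calc (d:ℚ) * ((Nat.gcd p.1 p.2 : ℚ) * necklacePoly k₁ p.1 * necklacePoly k₂ p.2)
        = ((d:ℚ) * (Nat.gcd p.1 p.2 : ℚ)) * necklacePoly k₁ p.1 * necklacePoly k₂ p.2 := by ring
      _ = _ := by rw [this]; ring
  rw [Finset.sum_congr rfl key]
  have hmaps : ∀ p ∈ n.divisors ×ˢ n.divisors, Nat.lcm p.1 p.2 ∈ n.divisors := by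
    rintro ⟨a, b⟩ hp
    simp only [Finset.mem_product, Nat.mem_divisors] at hp
    exact Nat.mem_divisors.mpr ⟨Nat.lcm_dvd hp.1.1 hp.2.1, hn.ne'⟩
  rw [Finset.sum_fiberwise_of_maps_to hmaps
    (fun p => ((p.1 : ℚ) * necklacePoly k₁ p.1) * ((p.2 : ℚ) * necklacePoly k₂ p.2))]
  rw [Finset.sum_product]
  simp only []
  rw [show (∑ x ∈ n.divisors, ∑ y ∈ n.divisors,
      ((x:ℚ) * necklacePoly k₁ x * ((y:ℚ) * necklacePoly k₂ y))) =
      (∑ x ∈ n.divisors, ((x:ℚ) * necklacePoly k₁ x)) *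
      (∑ y ∈ n.divisors, ((y:ℚ) * necklacePoly k₂ y)) from
    (Finset.sum_mul_sum _ _ _ _).symm]
  rw [necklace_inv k₁ n hn, necklace_inv k₂ n hn]
  push_cast
  ring

/-- `M(k₁k₂, n) = ∑_{lcm(i,j) = n} gcd(i,j) M(k₁, i) M(k₂, j)`,
the sum over pairs of divisors `(i, j)` of `n` with `lcm(i, j) = n`. -/
theorem necklacePoly_mul (k₁ k₂ n : ℕ) (hk₁ : 0 < k₁) (hk₂ : 0 < k₂) (hn : 0 < n) :
    necklacePoly (k₁ * k₂) n =
      ∑ p ∈ (n.divisors ×ˢ n.divisors).filter (fun p => Nat.lcm p.1 p.2 = n),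
        (Nat.gcd p.1 p.2 : ℚ) * necklacePoly k₁ p.1 * necklacePoly k₂ p.2 := by
  have h1 := (ArithmeticFunction.sum_eq_iff_sum_smul_moebius_eq
    (f := fun d => ((d : ℕ) : ℚ) * necklacePoly (k₁ * k₂) d)
    (g := fun n => ((k₁ * k₂ : ℕ) : ℚ) ^ n)).mp (necklace_inv (k₁ * k₂)) n hn
  have h2 := (ArithmeticFunction.sum_eq_iff_sum_smul_moebius_eq
    (f := fun d => ((d : ℕ) : ℚ) * Spair k₁ k₂ d)
    (g := fun n => ((k₁ * k₂ : ℕ) : ℚ) ^ n)).mp (spair_inv k₁ k₂) n hn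
  have h3 : (n : ℚ) * necklacePoly (k₁ * k₂) n = (n : ℚ) * Spair k₁ k₂ n :=
    h1.symm.trans h2
  have := mul_left_cancel₀ (a := (n:ℚ)) (by exact_mod_cast hn.ne') h3
  rw [this, Spair]
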